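/- Let N ≥ 13 be an integer and consider the real quartic polynomial P(α) = α⁴ − 2(N−4)α³ + (N²−10N+20)α² + 2(N−2)(N−4)α − 8(N−2)(N−4), which can be written as P(α) = α(α+2)(N−4−α)(N−2−α) − 8(N−2)(N−4). Then P has four distinct real roots; moreover, exactly one root lies in the open interval (0, (N−4)/2), exactly one root is negative, and exactly two roots are greater than (N−4)/2. -/

import Mathlib

open Polynomial

/-- For `N ≥ 13`, the quartic
`P(α) = α⁴ − 2(N−4)α³ + (N²−10N+20)α² + 2(N−2)(N−4)α − 8(N−2)(N−4)`
has four distinct real roots: exactly one negative, exactly one in `(0, (N−4)/2)`,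
and exactly two greater than `(N−4)/2`. -/
theorem stmt_19 (N : ℕ) (hN : 13 ≤ N)
    (P : ℝ → ℝ)
    (hP : ∀ α : ℝ, P α =
      α ^ 4 - 2 * ((N : ℝ) - 4) * α ^ 3 + ((N : ℝ) ^ 2 - 10 * (N : ℝ) + 20) * α ^ 2
        + 2 * ((N : ℝ) - 2) * ((N : ℝ) - 4) * α - 8 * ((N : ℝ) - 2) * ((N : ℝ) - 4)) :
    ∃ r₁ r₂ r₃ r₄ : ℝ,
      r₁ ≠ r₂ ∧ r₁ ≠ r₃ ∧ r₁ ≠ r₄ ∧ r₂ ≠ r₃ ∧ r₂ ≠ r₄ ∧ r₃ ≠ r₄ ∧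
      P r₁ = 0 ∧ P r₂ = 0 ∧ P r₃ = 0 ∧ P r₄ = 0 ∧
      (∀ r : ℝ, P r = 0 → r = r₁ ∨ r = r₂ ∨ r = r₃ ∨ r = r₄) ∧
      r₁ < 0 ∧
      (0 < r₂ ∧ r₂ < ((N : ℝ) - 4) / 2) ∧
      ((N : ℝ) - 4) / 2 < r₃ ∧ ((N : ℝ) - 4) / 2 < r₄ := by
  set M : ℝ := (N : ℝ) with hMdef
  have hM13 : (13 : ℝ) ≤ M := by rw [hMdef]; exact_mod_cast hN
  set m : ℝ := (M - 4) / 2 with hmdef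
  have hPc : Continuous P := by
    have hfe : P = fun α : ℝ => α ^ 4 - 2 * (M - 4) * α ^ 3 + (M ^ 2 - 10 * M + 20) * α ^ 2
        + 2 * (M - 2) * (M - 4) * α - 8 * (M - 2) * (M - 4) := funext hP
    rw [hfe]; continuity
  -- sign values
  have hPnegM : 0 < P (-M) := by rw [hP]; nlinarith [sq_nonneg M, sq_nonneg (M - 13)]
  have hPneg2 : P (-2) < 0 := by rw [hP]; nlinarith [sq_nonneg (M - 13)]
  have hP0 : P 0 < 0 := by rw [hP]; nlinarith [sq_nonneg (M - 13)]
  have hPm : 0 < P m := by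
    rw [hP, hmdef]; nlinarith [sq_nonneg (M - 13), sq_nonneg M]
  have hPM4 : P (M - 4) < 0 := by rw [hP]; nlinarith [sq_nonneg (M - 13)]
  have hPM : 0 < P M := by rw [hP]; nlinarith
  -- IVT roots
  have hm0 : (0 : ℝ) < m := by rw [hmdef]; linarith
  have hmM4 : m < M - 4 := by rw [hmdef]; linarith
  obtain ⟨r₁, hr₁I, hr₁⟩ : ∃ x ∈ Set.Ioo (-M) (-2 : ℝ), P x = 0 := by
    have := intermediate_value_Ioo' (by linarith : -M ≤ (-2 : ℝ)) hPc.continuousOn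
    obtain ⟨x, hx, hx0⟩ := this ⟨hPneg2, hPnegM⟩
    exact ⟨x, hx, hx0⟩
  obtain ⟨r₂, hr₂I, hr₂⟩ : ∃ x ∈ Set.Ioo (0 : ℝ) m, P x = 0 := by
    have := intermediate_value_Ioo (le_of_lt hm0) hPc.continuousOn
    obtain ⟨x, hx, hx0⟩ := this ⟨hP0, hPm⟩
    exact ⟨x, hx, hx0⟩
  obtain ⟨r₃, hr₃I, hr₃⟩ : ∃ x ∈ Set.Ioo m (M - 4), P x = 0 := by
    have := intermediate_value_Ioo' (le_of_lt hmM4) hPc.continuousOn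
    obtain ⟨x, hx, hx0⟩ := this ⟨hPM4, hPm⟩
    exact ⟨x, hx, hx0⟩
  obtain ⟨r₄, hr₄I, hr₄⟩ : ∃ x ∈ Set.Ioo (M - 4) M, P x = 0 := by
    have := intermediate_value_Ioo (by linarith : M - 4 ≤ M) hPc.continuousOn
    obtain ⟨x, hx, hx0⟩ := this ⟨hPM4, hPM⟩
    exact ⟨x, hx, hx0⟩
  obtain ⟨h1a, h1b⟩ := hr₁I
  obtain ⟨h2a, h2b⟩ := hr₂I
  obtain ⟨h3a, h3b⟩ := hr₃I
  obtain ⟨h4a, h4b⟩ := hr₄I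
  have ho12 : r₁ < r₂ := by linarith
  have ho23 : r₂ < r₃ := by linarith
  have ho34 : r₃ < r₄ := by linarith
  -- the polynomial
  set p : ℝ[X] := X ^ 4 - C (2 * (M - 4)) * X ^ 3 + C (M ^ 2 - 10 * M + 20) * X ^ 2
      + C (2 * (M - 2) * (M - 4)) * X - C (8 * (M - 2) * (M - 4)) with hpdef
  have hpe : ∀ α, p.eval α = P α := by
    intro α
    rw [hP, hpdef]
    simp
  have hpd : p.natDegree = 4 := by
    rw [hpdef]
    compute_degree!
  have hp0 : p ≠ 0 := by
    intro h
    rw [h] at hpd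
    simp at hpd
  have hmem : ∀ x : ℝ, P x = 0 → x ∈ p.roots.toFinset := by
    intro x hx
    rw [Multiset.mem_toFinset, mem_roots hp0]
    simpa [IsRoot, hpe] using hx
  have key : ∀ r : ℝ, P r = 0 → r = r₁ ∨ r = r₂ ∨ r = r₃ ∨ r = r₄ := by
    intro r hr
    by_contra hcon
    push_neg at hcon
    obtain ⟨h1, h2, h3, h4⟩ := hcon
    have hsub : ({r₁, r₂, r₃, r₄, r} : Finset ℝ) ⊆ p.roots.toFinset := by
      intro x hx
      simp only [Finset.mem_insert, Finset.mem_singleton] at hx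
      rcases hx with rfl | rfl | rfl | rfl | rfl
      · exact hmem _ hr₁
      · exact hmem _ hr₂
      · exact hmem _ hr₃
      · exact hmem _ hr₄
      · exact hmem _ hr
    have hcard : ({r₁, r₂, r₃, r₄, r} : Finset ℝ).card = 5 := by
      rw [Finset.card_insert_of_notMem (by
        simp only [Finset.mem_insert, Finset.mem_singleton]
        push_neg
        exact ⟨by linarith, by linarith, by linarith, fun h => h1 h.symm⟩),
        Finset.card_insert_of_notMem (by
        simp only [Finset.mem_insert, Finset.mem_singleton]
        push_neg
        exact ⟨by linarith, by linarith, fun h => h2 h.symm⟩),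
        Finset.card_insert_of_notMem (by
        simp only [Finset.mem_insert, Finset.mem_singleton]
        push_neg
        exact ⟨by linarith, fun h => h3 h.symm⟩),
        Finset.card_insert_of_notMem (by
        simp only [Finset.mem_singleton]
        exact fun h => h4 h.symm)]
      simp
    have h5 : 5 ≤ p.roots.toFinset.card := hcard ▸ Finset.card_le_card hsub
    have h6 : p.roots.toFinset.card ≤ Multiset.card p.roots := Multiset.toFinset_card_le _
    have h7 : Multiset.card p.roots ≤ 4 := by
      have := p.card_roots' 
      omega
    omega
  exact ⟨r₁, r₂, r₃, r₄, by linarith, by linarith, by linarith, by linarith, by linarith,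
    by linarith, hr₁, hr₂, hr₃, hr₄, key, by linarith, ⟨h2a, h2b⟩, h3a, by linarith⟩
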